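/- For every j ∉ {1, i} and every integer r ≥ 2, one has P(F^{r,1}_{1,j} \ C_a) ≥ P(F^{1,r}_{1,j} \ C_a). -/

import Mathlib

open MeasureTheory ProbabilityTheory ENNReal

namespace BallsBins

variable {k : ℕ}

/-- Number of times bin `j` is selected during the first `t` rounds of `ω`. -/
def numSel (ω : ℕ → Fin k) (j : Fin k) (t : ℕ) : ℕ :=
  ((Finset.range t).filter (fun s => ω s = j)).card

/-- Content (possibly negative) of bin `j` at the end of round `t`, started from `n`. -/
def content (n : Fin k → ℕ) (ω : ℕ → Fin k) (j : Fin k) (t : ℕ) : ℤ :=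
  (n j : ℤ) - numSel ω j t

/-- The set of non-empty bins at the end of round `t`. -/
def nonemptyBins (n : Fin k → ℕ) (ω : ℕ → Fin k) (t : ℕ) : Finset (Fin k) :=
  Finset.univ.filter (fun j => 0 < content n ω j t)

/-- `T n ω` : the first round at which a unique non-empty bin remains (`⊤` if never). -/
noncomputable def T (n : Fin k → ℕ) (ω : ℕ → Fin k) : ℕ∞ :=
  sInf ((fun t : ℕ => (t : ℕ∞)) '' {t | (nonemptyBins n ω t).card = 1})

/-- `X n ω` : the number of balls remaining when the process stops, i.e. at round `T n ω`. -/
noncomputable def X (n : Fin k → ℕ) (ω : ℕ → Fin k) : ℕ :=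
  ∑ j, (n j - numSel ω j (T n ω).toNat)

/-- Condition (a): bin `b1` contains exactly one ball more than bin `i` at the end of round `t`. -/
def condA (n : Fin k → ℕ) (b1 i : Fin k) (ω : ℕ → Fin k) (t : ℕ) : Prop :=
  content n ω b1 t = content n ω i t + 1

/-- Condition (b): at the end of round `t` there are exactly two non-empty bins and one of
them contains exactly one ball. -/
def condB (n : Fin k → ℕ) (ω : ℕ → Fin k) (t : ℕ) : Prop :=
  (nonemptyBins n ω t).card = 2 ∧ ∃ j, content n ω j t = 1

/-- `S n b1 i ω` : the first round at the end of which condition (a) or (b) occurs. -/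
noncomputable def S (n : Fin k → ℕ) (b1 i : Fin k) (ω : ℕ → Fin k) : ℕ∞ :=
  sInf ((fun t : ℕ => (t : ℕ∞)) '' {t | condA n b1 i ω t ∨ condB n ω t})

/-- `Ca n b1 i` : the event that condition (a) occurs at round `S n b1 i`. -/
def Ca (n : Fin k → ℕ) (b1 i : Fin k) : Set (ℕ → Fin k) :=
  {ω | ∃ t : ℕ, S n b1 i ω = (t : ℕ∞) ∧ condA n b1 i ω t}

/-- The event that bins `p` and `q` are the last two non-empty bins. -/
def lastTwo (n : Fin k → ℕ) (p q : Fin k) : Set (ℕ → Fin k) :=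
  {ω | ∃ t : ℕ, nonemptyBins n ω t = {p, q}}

/-- The first round at which condition (b) is triggered (`⊤` if never). -/
noncomputable def TB (n : Fin k → ℕ) (ω : ℕ → Fin k) : ℕ∞ :=
  sInf ((fun t : ℕ => (t : ℕ∞)) '' {t | condB n ω t})

/-- `Fab n b1 j a b` : the event that bins `b1` and `j` are the last two non-empty bins and,
at the first round at which condition (b) is triggered, bins `b1` and `j` contain `a` and `b`
balls respectively. -/
def Fab (n : Fin k → ℕ) (b1 j : Fin k) (a b : ℕ) : Set (ℕ → Fin k) :=
  lastTwo n b1 j ∩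
    {ω | ∃ t : ℕ, TB n ω = (t : ℕ∞) ∧ content n ω b1 t = (a : ℤ) ∧ content n ω j t = (b : ℤ)}

/-- The assignment `n - e_{b1} + e_i`. -/
def shift (n : Fin k → ℕ) (b1 i : Fin k) : Fin k → ℕ :=
  Function.update (Function.update n b1 (n b1 - 1)) i (n i + 1)

/-- The uniform probability measure on `Fin k`. -/
noncomputable def unifFin (k : ℕ) : Measure (Fin k) := (k : ℝ≥0∞)⁻¹ • Measure.count

/-- `IsIIDUniform μ` : `μ` is a probability measure on `[k]^ℕ` under which the coordinates
are independent and each is uniformly distributed on `Fin k`; this uniquely characterizes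
the product of uniform measures. -/
structure IsIIDUniform (μ : Measure (ℕ → Fin k)) : Prop where
  prob : IsProbabilityMeasure μ
  indep : iIndepFun (fun (t : ℕ) (ω : ℕ → Fin k) => ω t) μ
  unif : ∀ t : ℕ, μ.map (fun ω : ℕ → Fin k => ω t) = unifFin k

/-! ### Auxiliary development -/

section Aux

open Finset

/-! #### Integer sequences with steps of size at most 1 -/

/-- Discrete intermediate value theorem. -/
lemma exists_zero_of_step {f : ℕ → ℤ} (hstep : ∀ u, |f (u + 1) - f u| ≤ 1)
    {a c : ℕ} (ha : 0 ≤ f a) (hc : f c < 0) (hac : a ≤ c) :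
    ∃ v, a ≤ v ∧ v < c ∧ f v = 0 := by
  classical
  have hex : ∃ v, a ≤ v ∧ f v < 0 := ⟨c, hac, hc⟩
  let v0 := Nat.find hex
  have hv0 : a ≤ v0 ∧ f v0 < 0 := Nat.find_spec hex
  have hv0c : v0 ≤ c := Nat.find_le ⟨hac, hc⟩
  have hv0a : v0 ≠ a := by
    intro h; rw [h] at hv0; omega
  obtain ⟨w, hw1⟩ : ∃ w, v0 = w + 1 :=
    Nat.exists_eq_succ_of_ne_zero (by omega : v0 ≠ 0)
  have hwa : a ≤ w := by
    have := hv0.1; omega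
  have hw : ¬(a ≤ w ∧ f w < 0) := by
    have : w < v0 := by omega
    exact Nat.find_min hex this
  have hfw : 0 ≤ f w := by
    by_contra h; exact hw ⟨hwa, by omega⟩
  have h2 := hstep w
  rw [abs_le] at h2
  have hv2 := hv0.2
  rw [hw1] at hv2
  have hfw0 : f w = 0 := by omega
  exact ⟨w, hwa, by omega, hfw0⟩

/-- If a step-1 sequence starts `≥ 2` and never equals `1` up to time `t`,
it stays `≥ 2` up to time `t`. -/
lemma ge_two_of_step {f : ℕ → ℤ} (hstep : ∀ u, |f (u + 1) - f u| ≤ 1)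
    (h0 : 2 ≤ f 0) {t : ℕ} (hne : ∀ u ≤ t, f u ≠ 1) : ∀ u ≤ t, 2 ≤ f u := by
  intro u
  induction u with
  | zero => intro _; exact h0
  | succ v ih =>
    intro hvt
    have h1 := ih (by omega)
    have h2 := hstep v
    have h3 := hne (v + 1) hvt
    rw [abs_le] at h2
    omega

/-! #### Lemmas about `sInf` of coerced sets in `ℕ∞` -/

lemma sInf_image_coe_eq {M : Set ℕ} {t : ℕ} (ht : t ∈ M) (hlt : ∀ u, u < t → u ∉ M) :
    sInf ((fun u : ℕ => (u : ℕ∞)) '' M) = (t : ℕ∞) := by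
  apply le_antisymm
  · exact sInf_le ⟨t, ht, rfl⟩
  · apply le_sInf
    rintro x ⟨u, hu, rfl⟩
    have : t ≤ u := not_lt.mp fun h => hlt u h hu
    simpa using (Nat.cast_le.mpr this : (t : ℕ∞) ≤ u)

lemma mem_and_min_of_sInf_image_coe {M : Set ℕ} {t : ℕ}
    (h : sInf ((fun u : ℕ => (u : ℕ∞)) '' M) = (t : ℕ∞)) :
    t ∈ M ∧ ∀ u, u < t → u ∉ M := by
  classical
  have hne : M.Nonempty := by
    by_contra hemp
    rw [Set.not_nonempty_iff_eq_empty] at hemp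
    rw [hemp] at h
    simp at h
  have h0 : sInf ((fun u : ℕ => (u : ℕ∞)) '' M) = ((sInf M : ℕ) : ℕ∞) :=
    sInf_image_coe_eq (Nat.sInf_mem hne) (fun u hu => Nat.notMem_of_lt_sInf hu)
  have : ((sInf M : ℕ) : ℕ∞) = (t : ℕ∞) := by rw [← h0, h]
  have ht : sInf M = t := by exact_mod_cast this
  exact ht ▸ ⟨Nat.sInf_mem hne, fun u hu => Nat.notMem_of_lt_sInf hu⟩

/-! #### Basic lemmas about `numSel` and `content` -/

variable {k : ℕ}

lemma numSel_succ (ω : ℕ → Fin k) (m : Fin k) (t : ℕ) :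
    numSel ω m (t + 1) = numSel ω m t + if ω t = m then 1 else 0 := by
  classical
  unfold numSel
  rw [Finset.range_add_one, Finset.filter_insert]
  by_cases h : ω t = m
  · rw [if_pos h, if_pos h, Finset.card_insert_of_notMem (by simp)]
  · rw [if_neg h, if_neg h, add_zero]

lemma content_succ (n : Fin k → ℕ) (ω : ℕ → Fin k) (m : Fin k) (t : ℕ) :
    content n ω m (t + 1) = content n ω m t - if ω t = m then 1 else 0 := by
  by_cases h : ω t = m <;> simp [content, numSel_succ, h] <;> push_cast <;> ring

lemma content_zero (n : Fin k → ℕ) (ω : ℕ → Fin k) (m : Fin k) :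
    content n ω m 0 = (n m : ℤ) := by simp [content, numSel]

lemma content_pair_step (n : Fin k → ℕ) (ω : ℕ → Fin k) (p q : Fin k) (u : ℕ) :
    |(content n ω p (u + 1) - content n ω q (u + 1)) -
      (content n ω p u - content n ω q u)| ≤ 1 := by
  rw [content_succ, content_succ, abs_le]
  by_cases h1 : ω u = p <;> by_cases h2 : ω u = q <;> simp [h1, h2] <;> omega

/-! #### The reflection map `psi` -/

/-- The reflection map: swap the roles of `b1` and `j` during rounds `s ≤ u < t`. -/
def psi (b1 j : Fin k) (s t : ℕ) (ω : ℕ → Fin k) : ℕ → Fin k :=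
  fun u => if s ≤ u ∧ u < t then Equiv.swap b1 j (ω u) else ω u

lemma psi_psi (b1 j : Fin k) (s t : ℕ) (ω : ℕ → Fin k) :
    psi b1 j s t (psi b1 j s t ω) = ω := by
  funext u
  unfold psi
  by_cases h : s ≤ u ∧ u < t <;> simp [h]

lemma measurable_psi (b1 j : Fin k) (s t : ℕ) : Measurable (psi b1 j s t) := by
  apply measurable_pi_lambda
  intro u
  by_cases h : s ≤ u ∧ u < t
  · have : (fun ω : ℕ → Fin k => psi b1 j s t ω u) =
        fun ω => Equiv.swap b1 j (ω u) := by
      funext ω; simp [psi, h]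
    rw [this]
    exact measurable_from_top.comp (measurable_pi_apply u)
  · have : (fun ω : ℕ → Fin k => psi b1 j s t ω u) = fun ω => ω u := by
      funext ω; simp [psi, h]
    rw [this]
    exact measurable_pi_apply u

lemma psi_apply_low {b1 j : Fin k} {s t v : ℕ} (ω : ℕ → Fin k) (h : v < s) :
    psi b1 j s t ω v = ω v := if_neg (by omega)

lemma psi_apply_mid {b1 j : Fin k} {s t v : ℕ} (ω : ℕ → Fin k) (h1 : s ≤ v) (h2 : v < t) :
    psi b1 j s t ω v = Equiv.swap b1 j (ω v) := if_pos ⟨h1, h2⟩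

lemma content_psi_low (n : Fin k → ℕ) {b1 j : Fin k} {s t u : ℕ} (ω : ℕ → Fin k)
    (hu : u ≤ s) (m : Fin k) :
    content n (psi b1 j s t ω) m u = content n ω m u := by
  unfold content
  congr 2
  unfold numSel
  congr 1
  apply Finset.filter_congr
  intro v hv
  rw [psi_apply_low ω (lt_of_lt_of_le (Finset.mem_range.mp hv) hu)]

lemma content_psi_mid (n : Fin k → ℕ) {b1 j : Fin k} {s t : ℕ} (ω : ℕ → Fin k)
    (heq : content n ω b1 s = content n ω j s) :
    ∀ u, s ≤ u → u ≤ t → ∀ m, content n (psi b1 j s t ω) m u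
      = content n ω (Equiv.swap b1 j m) u := by
  refine Nat.le_induction ?_ ?_
  · intro _ m
    rw [content_psi_low n ω le_rfl m]
    rcases eq_or_ne m b1 with rfl | h1
    · rw [Equiv.swap_apply_left]; exact heq
    rcases eq_or_ne m j with rfl | h2
    · rw [Equiv.swap_apply_right]; exact heq.symm
    · rw [Equiv.swap_apply_of_ne_of_ne h1 h2]
  · intro u hsu ih hut m
    have hut' : u ≤ t := by omega
    have hv : u < t := by omega
    rw [content_succ, content_succ, ih hut' m, psi_apply_mid ω hsu hv]
    congr 1
    have : (Equiv.swap b1 j (ω u) = m) ↔ (ω u = Equiv.swap b1 j m) := by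
      constructor
      · intro h; rw [← h, Equiv.swap_apply_self]
      · intro h; rw [h, Equiv.swap_apply_self]
    by_cases h : ω u = Equiv.swap b1 j m
    · rw [if_pos (this.mpr h), if_pos h]
    · rw [if_neg (fun hc => h (this.mp hc)), if_neg h]

/-! #### `nonemptyBins` and `condB` -/

lemma mem_nonemptyBins {n : Fin k → ℕ} {ω : ℕ → Fin k} {t : ℕ} {m : Fin k} :
    m ∈ nonemptyBins n ω t ↔ 0 < content n ω m t := by
  simp [nonemptyBins]

lemma nonemptyBins_eq_pair {n : Fin k → ℕ} {ω : ℕ → Fin k} {t : ℕ} {b1 j : Fin k}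
    (hne : b1 ≠ j) (hcard : (nonemptyBins n ω t).card = 2)
    (h1 : 0 < content n ω b1 t) (h2 : 0 < content n ω j t) :
    nonemptyBins n ω t = {b1, j} := by
  have hsub : ({b1, j} : Finset (Fin k)) ⊆ nonemptyBins n ω t := by
    intro m hm
    simp only [Finset.mem_insert, Finset.mem_singleton] at hm
    rcases hm with rfl | rfl
    · exact mem_nonemptyBins.mpr h1
    · exact mem_nonemptyBins.mpr h2
  have hc2 : ({b1, j} : Finset (Fin k)).card = 2 := by
    rw [Finset.card_insert_of_notMem (by simp [hne]), Finset.card_singleton]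
  exact (Finset.eq_of_subset_of_card_le hsub (by omega)).symm

/-- `condB` is invariant under a permutation of the contents of the bins. -/
lemma condB_congr_perm {n : Fin k → ℕ} {ω ω' : ℕ → Fin k} {u : ℕ} (σ : Equiv.Perm (Fin k))
    (h : ∀ m, content n ω' m u = content n ω (σ m) u) :
    condB n ω' u ↔ condB n ω u := by
  have hbins : nonemptyBins n ω' u = (nonemptyBins n ω u).image σ.symm := by
    ext m
    simp only [mem_nonemptyBins, Finset.mem_image]
    constructor
    · intro hm
      exact ⟨σ m, h m ▸ hm, σ.symm_apply_apply m⟩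
    · rintro ⟨x, hx, rfl⟩
      rw [h (σ.symm x), σ.apply_symm_apply]
      exact hx
  constructor
  · rintro ⟨hcard, m, hm⟩
    refine ⟨?_, σ m, ?_⟩
    · rw [hbins, Finset.card_image_of_injective _ σ.symm.injective] at hcard
      exact hcard
    · rw [← h m]; exact hm
  · rintro ⟨hcard, m, hm⟩
    refine ⟨?_, σ.symm m, ?_⟩
    · rw [hbins, Finset.card_image_of_injective _ σ.symm.injective]
      exact hcard
    · rw [h, σ.apply_symm_apply]; exact hm

lemma condB_psi_iff {n : Fin k → ℕ} {b1 j : Fin k} {s t : ℕ} (ω : ℕ → Fin k)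
    (heq : content n ω b1 s = content n ω j s) {u : ℕ} (hu : u ≤ t) :
    condB n (psi b1 j s t ω) u ↔ condB n ω u := by
  rcases le_or_gt u s with h | h
  · exact condB_congr_perm (Equiv.refl _) (fun m => content_psi_low n ω h m)
  · exact condB_congr_perm (Equiv.swap b1 j)
      (fun m => content_psi_mid n ω heq u h.le hu m)

/-! #### Measurability -/

lemma measurable_content (n : Fin k → ℕ) (m : Fin k) (t : ℕ) :
    Measurable fun ω : ℕ → Fin k => content n ω m t := by
  classical
  have h1 : Measurable fun ω : ℕ → Fin k => numSel ω m t := by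
    have : (fun ω : ℕ → Fin k => numSel ω m t)
        = fun ω => ∑ v ∈ Finset.range t, if ω v = m then 1 else 0 := by
      funext ω; simp only [numSel]; rw [Finset.card_filter]
    rw [this]
    exact Finset.measurable_sum _ fun v _ =>
      (measurable_from_top (f := fun x : Fin k => if x = m then (1 : ℕ) else 0)).comp
        (measurable_pi_apply v)
  exact measurable_const.sub ((measurable_from_top (f := fun c : ℕ => (c : ℤ))).comp h1)

lemma measurableSet_content_eq (n : Fin k → ℕ) (m : Fin k) (t : ℕ) (z : ℤ) :
    MeasurableSet {ω : ℕ → Fin k | content n ω m t = z} :=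
  (measurable_content n m t) (measurableSet_singleton z)

lemma measurableSet_content_eq_content (n : Fin k → ℕ) (p q : Fin k) (u : ℕ) :
    MeasurableSet {ω : ℕ → Fin k | content n ω p u = content n ω q u} := by
  have : {ω : ℕ → Fin k | content n ω p u = content n ω q u} =
      ⋃ z : ℤ, ({ω : ℕ → Fin k | content n ω p u = z} ∩
        {ω : ℕ → Fin k | content n ω q u = z}) := by
    ext ω
    simp only [Set.mem_iUnion, Set.mem_inter_iff, Set.mem_setOf_eq]
    exact ⟨fun h => ⟨content n ω q u, h, rfl⟩, fun ⟨z, h1, h2⟩ => h1.trans h2.symm⟩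
  rw [this]
  exact MeasurableSet.iUnion fun z =>
    (measurableSet_content_eq n p u z).inter (measurableSet_content_eq n q u z)

lemma measurableSet_condA (n : Fin k → ℕ) (b1 i : Fin k) (u : ℕ) :
    MeasurableSet {ω : ℕ → Fin k | condA n b1 i ω u} := by
  have : {ω : ℕ → Fin k | condA n b1 i ω u} =
      ⋃ z : ℤ, ({ω : ℕ → Fin k | content n ω b1 u = z + 1} ∩
        {ω : ℕ → Fin k | content n ω i u = z}) := by
    ext ω
    simp only [Set.mem_iUnion, Set.mem_inter_iff, Set.mem_setOf_eq, condA]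
    exact ⟨fun h => ⟨content n ω i u, h, rfl⟩, fun ⟨z, h1, h2⟩ => by rw [h1, h2]⟩
  rw [this]
  exact MeasurableSet.iUnion fun z =>
    (measurableSet_content_eq n b1 u (z + 1)).inter (measurableSet_content_eq n i u z)

lemma measurableSet_nonemptyBins_eq (n : Fin k → ℕ) (t : ℕ) (F : Finset (Fin k)) :
    MeasurableSet {ω : ℕ → Fin k | nonemptyBins n ω t = F} := by
  classical
  have : {ω : ℕ → Fin k | nonemptyBins n ω t = F} =
      ⋂ m : Fin k, (if m ∈ F then {ω : ℕ → Fin k | 0 < content n ω m t}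
        else {ω : ℕ → Fin k | 0 < content n ω m t}ᶜ) := by
    ext ω
    simp only [Set.mem_iInter, Set.mem_setOf_eq]
    constructor
    · intro h m
      by_cases hm : m ∈ F
      · simp only [hm, if_true, Set.mem_setOf_eq]
        exact mem_nonemptyBins.mp (h ▸ hm)
      · simp only [hm, if_false, Set.mem_compl_iff, Set.mem_setOf_eq]
        intro hc
        exact hm (h ▸ mem_nonemptyBins.mpr hc)
    · intro h
      ext m
      have hm := h m
      rw [mem_nonemptyBins]
      by_cases hmF : m ∈ F
      · simp only [hmF, if_true, Set.mem_setOf_eq] at hm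
        simp [hm, hmF]
      · simp only [hmF, if_false, Set.mem_compl_iff, Set.mem_setOf_eq] at hm
        simp [hm, hmF]
  rw [this]
  refine MeasurableSet.iInter fun m => ?_
  by_cases hm : m ∈ F
  · rw [if_pos hm]
    exact (measurable_content n m t) measurableSet_Ioi
  · rw [if_neg hm]
    exact ((measurable_content n m t) measurableSet_Ioi).compl

lemma measurableSet_condB (n : Fin k → ℕ) (u : ℕ) :
    MeasurableSet {ω : ℕ → Fin k | condB n ω u} := by
  classical
  have : {ω : ℕ → Fin k | condB n ω u} =
      (⋃ F : Finset (Fin k), ⋃ _ : F.card = 2, {ω : ℕ → Fin k | nonemptyBins n ω u = F}) ∩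
      (⋃ m : Fin k, {ω : ℕ → Fin k | content n ω m u = 1}) := by
    ext ω
    simp only [Set.mem_inter_iff, Set.mem_iUnion, Set.mem_setOf_eq, condB]
    constructor
    · rintro ⟨h1, m, hm⟩
      exact ⟨⟨nonemptyBins n ω u, h1, rfl⟩, m, hm⟩
    · rintro ⟨⟨F, hF, hFeq⟩, m, hm⟩
      exact ⟨hFeq ▸ hF, m, hm⟩
  rw [this]
  exact (MeasurableSet.iUnion fun F => MeasurableSet.iUnion fun _ =>
    measurableSet_nonemptyBins_eq n u F).inter
    (MeasurableSet.iUnion fun m => measurableSet_content_eq n m u 1)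

/-! #### The measure of boxes and invariance under `psi` -/

lemma mu_eval_preimage {μ : Measure (ℕ → Fin k)} (hμ : IsIIDUniform μ) (u : ℕ)
    (A : Set (Fin k)) :
    μ ((fun ω : ℕ → Fin k => ω u) ⁻¹' A) = unifFin k A := by
  rw [← hμ.unif u, Measure.map_apply (measurable_pi_apply u) MeasurableSet.of_discrete]

lemma unifFin_preimage_equiv (e : Equiv.Perm (Fin k)) (A : Set (Fin k)) :
    unifFin k (⇑e ⁻¹' A) = unifFin k A := by
  unfold unifFin
  simp only [Measure.smul_apply, smul_eq_mul]
  congr 1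
  rw [← Equiv.image_symm_eq_preimage]
  rw [Measure.count_apply_finite _ (Set.toFinite _),
    Measure.count_apply_finite _ (Set.toFinite _)]
  norm_cast
  rw [← Set.ncard_eq_toFinset_card, ← Set.ncard_eq_toFinset_card,
    Set.ncard_image_of_injective _ e.symm.injective]

lemma map_psi {μ : Measure (ℕ → Fin k)} (hμ : IsIIDUniform μ) (b1 j : Fin k) (s t : ℕ) :
    μ.map (psi b1 j s t) = μ := by
  classical
  haveI := hμ.prob
  haveI : IsProbabilityMeasure (μ.map (psi b1 j s t)) :=
    Measure.isProbabilityMeasure_map (measurable_psi b1 j s t).aemeasurable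
  have hgen : (inferInstance : MeasurableSpace (ℕ → Fin k)) =
      MeasurableSpace.generateFrom
        (squareCylinders fun _ : ℕ => {A : Set (Fin k) | MeasurableSet A}) :=
    generateFrom_squareCylinders.symm
  refine ext_of_generate_finite _ hgen
    (isPiSystem_squareCylinders (fun _ => MeasurableSpace.isPiSystem_measurableSet)
      (fun _ => (MeasurableSet.univ : MeasurableSet (Set.univ : Set (Fin k))))) ?_ (by simp)
  rintro _ ⟨F, tS, _, rfl⟩
  -- compute the measure of a square cylinder
  have hbox : ∀ tS' : ℕ → Set (Fin k),
      μ ((F : Set ℕ).pi tS') = ∏ u ∈ F, μ ((fun ω : ℕ → Fin k => ω u) ⁻¹' tS' u) := by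
    intro tS'
    have : (F : Set ℕ).pi tS' = ⋂ u ∈ F, (fun ω : ℕ → Fin k => ω u) ⁻¹' tS' u := by
      rw [Set.pi_def]
      simp [Finset.mem_coe]
    rw [this, hμ.indep.meas_biInter (S := F)
      (s := fun u => (fun ω : ℕ → Fin k => ω u) ⁻¹' tS' u)
      (fun u _ => ⟨tS' u, MeasurableSet.of_discrete, rfl⟩)]
  have hmeas : MeasurableSet ((F : Set ℕ).pi tS) :=
    MeasurableSet.pi (Finset.countable_toSet F) (fun u _ => MeasurableSet.of_discrete)
  rw [Measure.map_apply (measurable_psi b1 j s t) hmeas]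
  have hpre : psi b1 j s t ⁻¹' (F : Set ℕ).pi tS =
      (F : Set ℕ).pi (fun u => if s ≤ u ∧ u < t then ⇑(Equiv.swap b1 j) ⁻¹' tS u else tS u) := by
    ext ω
    simp only [Set.mem_preimage, Set.mem_pi, Finset.mem_coe]
    refine forall_congr' fun u => forall_congr' fun _ => ?_
    by_cases h : s ≤ u ∧ u < t <;> simp [psi, h]
  rw [hpre, hbox, hbox]
  refine Finset.prod_congr rfl fun u _ => ?_
  by_cases h : s ≤ u ∧ u < t
  · rw [if_pos h, mu_eval_preimage hμ, mu_eval_preimage hμ, unifFin_preimage_equiv]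
  · rw [if_neg h]

/-! #### The decomposition events -/

/-- The event that condition (b) is first triggered at round `t`, with bins `b1`, `j`
containing `a`, `b` balls then, `s` is the last round before `t` at which bins `b1` and `j`
have equal contents, and condition (a) never holds up to round `t`. -/
def Aset (n : Fin k → ℕ) (b1 i j : Fin k) (a b : ℕ) (s t : ℕ) : Set (ℕ → Fin k) :=
  {ω | s < t ∧ condB n ω t ∧ (∀ u, u < t → ¬condB n ω u) ∧
    content n ω b1 t = (a : ℤ) ∧ content n ω j t = (b : ℤ) ∧
    content n ω b1 s = content n ω j s ∧
    (∀ u, s < u → u < t → content n ω b1 u ≠ content n ω j u) ∧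
    (∀ u, u ≤ t → ¬condA n b1 i ω u)}

lemma measurableSet_Aset (n : Fin k → ℕ) (b1 i j : Fin k) (a b s t : ℕ) :
    MeasurableSet (Aset n b1 i j a b s t) := by
  have : Aset n b1 i j a b s t =
      {ω : ℕ → Fin k | s < t} ∩ ({ω | condB n ω t} ∩
      ((⋂ u : ℕ, ⋂ _ : u < t, {ω : ℕ → Fin k | condB n ω u}ᶜ) ∩
      ({ω : ℕ → Fin k | content n ω b1 t = (a : ℤ)} ∩
      ({ω : ℕ → Fin k | content n ω j t = (b : ℤ)} ∩
      ({ω : ℕ → Fin k | content n ω b1 s = content n ω j s} ∩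
      ((⋂ u : ℕ, ⋂ _ : s < u, ⋂ _ : u < t,
        {ω : ℕ → Fin k | content n ω b1 u = content n ω j u}ᶜ) ∩
      (⋂ u : ℕ, ⋂ _ : u ≤ t, {ω : ℕ → Fin k | condA n b1 i ω u}ᶜ))))))) := by
    ext ω
    simp only [Aset, Set.mem_inter_iff, Set.mem_setOf_eq, Set.mem_iInter, Set.mem_compl_iff]
  rw [this]
  exact (MeasurableSet.const _).inter ((measurableSet_condB n t).inter
    (((MeasurableSet.iInter fun u => MeasurableSet.iInter fun _ =>
        (measurableSet_condB n u).compl)).inter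
    ((measurableSet_content_eq n b1 t (a : ℤ)).inter
    ((measurableSet_content_eq n j t (b : ℤ)).inter
    ((measurableSet_content_eq_content n b1 j s).inter
    ((MeasurableSet.iInter fun u => MeasurableSet.iInter fun _ =>
        MeasurableSet.iInter fun _ => (measurableSet_content_eq_content n b1 j u).compl).inter
    (MeasurableSet.iInter fun u => MeasurableSet.iInter fun _ =>
        (measurableSet_condA n b1 i u).compl)))))))

lemma TB_eq_of {n : Fin k → ℕ} {ω : ℕ → Fin k} {t : ℕ} (hBt : condB n ω t)
    (hmin : ∀ u, u < t → ¬condB n ω u) : TB n ω = (t : ℕ∞) :=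
  sInf_image_coe_eq (M := {u | condB n ω u}) hBt hmin

lemma S_eq_of {n : Fin k → ℕ} {b1 i : Fin k} {ω : ℕ → Fin k} {t : ℕ} (hBt : condB n ω t)
    (hmin : ∀ u, u < t → ¬condB n ω u) (hnA : ∀ u, u ≤ t → ¬condA n b1 i ω u) :
    S n b1 i ω = (t : ℕ∞) :=
  sInf_image_coe_eq (M := {u | condA n b1 i ω u ∨ condB n ω u}) (Or.inr hBt)
    (fun u hu h => h.elim (hnA u hu.le) (hmin u hu))

lemma Aset_subset {n : Fin k → ℕ} {b1 i j : Fin k} {a b s t : ℕ}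
    (ha : 1 ≤ a) (hb : 1 ≤ b) (hb1j : b1 ≠ j) :
    Aset n b1 i j a b s t ⊆ Fab n b1 j a b \ Ca n b1 i := by
  rintro ω ⟨hst, hBt, hmin, hca, hcb, -, -, hnA⟩
  have hpos1 : 0 < content n ω b1 t := by rw [hca]; exact_mod_cast ha
  have hpos2 : 0 < content n ω j t := by rw [hcb]; exact_mod_cast hb
  constructor
  · exact ⟨⟨t, nonemptyBins_eq_pair hb1j hBt.1 hpos1 hpos2⟩, t, TB_eq_of hBt hmin, hca, hcb⟩
  · rintro ⟨t', hS, hA⟩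
    have hS2 : S n b1 i ω = (t : ℕ∞) := S_eq_of hBt hmin hnA
    have ht' : t' = t := by
      rw [hS] at hS2
      exact_mod_cast hS2
    exact hnA t le_rfl (ht' ▸ hA)

set_option maxHeartbeats 1000000 in
lemma exists_Aset_of_mem {n : Fin k → ℕ} {b1 i j : Fin k} {r : ℕ} {ω : ℕ → Fin k}
    (hnj : n j ≤ n b1) (hr : 2 ≤ r)
    (hω : ω ∈ Fab n b1 j 1 r \ Ca n b1 i) :
    ∃ s t, ω ∈ Aset n b1 i j 1 r s t := by
  classical
  obtain ⟨⟨-, t, hTB, hc1, hcr⟩, hnCa⟩ := hω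
  obtain ⟨hBt, hmin⟩ := mem_and_min_of_sInf_image_coe (M := {u | condB n ω u}) hTB
  have hnA : ∀ u, u ≤ t → ¬condA n b1 i ω u := by
    intro u0 hu0 hA0
    have hne : {u | condA n b1 i ω u ∨ condB n ω u}.Nonempty := ⟨t, Or.inr hBt⟩
    have ht1mem := Nat.sInf_mem hne
    have hS : S n b1 i ω = ((sInf {u | condA n b1 i ω u ∨ condB n ω u} : ℕ) : ℕ∞) :=
      sInf_image_coe_eq ht1mem (fun u hu => Nat.notMem_of_lt_sInf hu)
    have ht1le : sInf {u | condA n b1 i ω u ∨ condB n ω u} ≤ u0 := Nat.sInf_le (Or.inl hA0)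
    have hAt1 : condA n b1 i ω (sInf {u | condA n b1 i ω u ∨ condB n ω u}) := by
      rcases ht1mem with h | h
      · exact h
      · have htle : t ≤ sInf {u | condA n b1 i ω u ∨ condB n ω u} :=
          not_lt.mp (fun hc => hmin _ hc h)
        have hu0t : u0 = sInf {u | condA n b1 i ω u ∨ condB n ω u} := by omega
        exact hu0t ▸ hA0
    exact hnCa ⟨_, hS, hAt1⟩
  have h0 : 0 ≤ content n ω b1 0 - content n ω j 0 := by
    rw [content_zero, content_zero]
    have : (n j : ℤ) ≤ (n b1 : ℤ) := by exact_mod_cast hnj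
    omega
  have hct : content n ω b1 t - content n ω j t < 0 := by
    rw [hc1, hcr]
    have : (2 : ℤ) ≤ (r : ℤ) := by exact_mod_cast hr
    push_cast
    omega
  obtain ⟨v, -, hvt, hv0⟩ := exists_zero_of_step
    (f := fun u => content n ω b1 u - content n ω j u)
    (fun u => content_pair_step n ω b1 j u) h0 hct (Nat.zero_le t)
  have hEne : ((Finset.range t).filter
      (fun u => content n ω b1 u = content n ω j u)).Nonempty :=
    ⟨v, by rw [Finset.mem_filter, Finset.mem_range]; exact ⟨hvt, by omega⟩⟩
  obtain ⟨hsrange, hseq⟩ := Finset.mem_filter.mp (Finset.max'_mem _ hEne)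
  refine ⟨_, t, Finset.mem_range.mp hsrange, hBt, hmin, hc1, hcr, hseq, ?_, hnA⟩
  intro u hsu hut hequ
  have : u ≤ ((Finset.range t).filter
      (fun u => content n ω b1 u = content n ω j u)).max' hEne :=
    Finset.le_max' _ u (Finset.mem_filter.mpr ⟨Finset.mem_range.mpr hut, hequ⟩)
  omega

set_option maxHeartbeats 1000000 in
lemma psi_mem_Aset {n : Fin k → ℕ} {b1 i j : Fin k} {r : ℕ}
    (hb1j : b1 ≠ j) (hib1 : i ≠ b1) (hij : i ≠ j) (hr : 2 ≤ r)
    (hni : (n i : ℤ) + 2 ≤ (n b1 : ℤ)) {s t : ℕ} {ω : ℕ → Fin k}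
    (hω : ω ∈ Aset n b1 i j 1 r s t) : psi b1 j s t ω ∈ Aset n b1 i j r 1 s t := by
  obtain ⟨hst, hBt, hmin, hc1, hcr, heqs, hneq, hnA⟩ := hω
  have hr2 : (2 : ℤ) ≤ (r : ℤ) := by exact_mod_cast hr
  have hmid : ∀ u, s ≤ u → u ≤ t → ∀ m,
      content n (psi b1 j s t ω) m u = content n ω (Equiv.swap b1 j m) u :=
    content_psi_mid n ω heqs
  have hlow : ∀ u, u ≤ s → ∀ m, content n (psi b1 j s t ω) m u = content n ω m u :=
    fun u hu m => content_psi_low n ω hu m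
  have hswb : Equiv.swap b1 j b1 = j := Equiv.swap_apply_left b1 j
  have hswj : Equiv.swap b1 j j = b1 := Equiv.swap_apply_right b1 j
  have hswi : Equiv.swap b1 j i = i := Equiv.swap_apply_of_ne_of_ne hib1 hij
  have hpos1 : 0 < content n ω b1 t := by rw [hc1]; norm_num
  have hposr : 0 < content n ω j t := by rw [hcr]; omega
  have hbins : nonemptyBins n ω t = {b1, j} := nonemptyBins_eq_pair hb1j hBt.1 hpos1 hposr
  have hit : content n ω i t ≤ 0 := by
    by_contra hc
    push_neg at hc
    have hmem : i ∈ nonemptyBins n ω t := mem_nonemptyBins.mpr hc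
    rw [hbins] at hmem
    simp only [Finset.mem_insert, Finset.mem_singleton] at hmem
    rcases hmem with h | h
    · exact hib1 h
    · exact hij h
  have hg : ∀ u, u ≤ t → 2 ≤ content n ω b1 u - content n ω i u := by
    have h00 : 2 ≤ content n ω b1 0 - content n ω i 0 := by
      rw [content_zero, content_zero]; omega
    have hne1 : ∀ u, u ≤ t → content n ω b1 u - content n ω i u ≠ 1 := by
      intro u hu hequ
      apply hnA u hu
      show content n ω b1 u = content n ω i u + 1
      omega
    exact ge_two_of_step (f := fun u => content n ω b1 u - content n ω i u)
      (fun u => content_pair_step n ω b1 i u) h00 hne1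
  have hDneg : ∀ u, s < u → u < t → content n ω b1 u - content n ω j u < 0 := by
    intro u hsu hut
    by_contra hc
    push_neg at hc
    have hct : content n ω b1 t - content n ω j t < 0 := by rw [hc1, hcr]; push_cast; omega
    obtain ⟨v, huv, hvt, hv0⟩ := exists_zero_of_step
      (f := fun w => content n ω b1 w - content n ω j w)
      (fun w => content_pair_step n ω b1 j w) hc hct hut.le
    exact hneq v (by omega) hvt (by omega)
  refine ⟨hst, ?_, ?_, ?_, ?_, ?_, ?_, ?_⟩
  · exact (condB_psi_iff ω heqs le_rfl).mpr hBt
  · intro u hu hB'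
    exact hmin u hu ((condB_psi_iff ω heqs hu.le).mp hB')
  · rw [hmid t hst.le le_rfl b1, hswb, hcr]
  · rw [hmid t hst.le le_rfl j, hswj, hc1]
  · rw [hlow s le_rfl b1, hlow s le_rfl j]; exact heqs
  · intro u hsu hut
    rw [hmid u (by omega) hut.le b1, hmid u (by omega) hut.le j, hswb, hswj]
    exact fun h => hneq u hsu hut h.symm
  · intro u hu hA'
    have hci' : content n (psi b1 j s t ω) i u = content n ω i u := by
      rcases le_or_gt u s with h | h
      · exact hlow u h i
      · rw [hmid u h.le hu i, hswi]
    unfold condA at hA'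
    rcases le_or_gt u s with h | h
    · rw [hlow u h b1, hci'] at hA'
      exact hnA u hu hA'
    · rcases lt_or_eq_of_le hu with hut | rfl
      · rw [hmid u h.le hu b1, hswb, hci'] at hA'
        have h1 := hDneg u h hut
        have h2 := hg u hu
        omega
      · rw [hmid u hst.le le_rfl b1, hswb, hcr, hci'] at hA'
        have := hit
        omega

lemma Aset_params_unique {n : Fin k → ℕ} {b1 i j : Fin k} {a b a' b' s t s' t' : ℕ}
    {ω : ℕ → Fin k} (h1 : ω ∈ Aset n b1 i j a b s t) (h2 : ω ∈ Aset n b1 i j a' b' s' t') :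
    s = s' ∧ t = t' := by
  obtain ⟨hst, hBt, hmin, -, -, heqs, hneq, -⟩ := h1
  obtain ⟨hst', hBt', hmin', -, -, heqs', hneq', -⟩ := h2
  have htt : t = t' := by
    rcases lt_trichotomy t t' with h | h | h
    · exact absurd hBt (hmin' t h)
    · exact h
    · exact absurd hBt' (hmin t' h)
  subst htt
  have hss : s = s' := by
    rcases lt_trichotomy s s' with h | h | h
    · exact absurd heqs' (hneq s' h hst')
    · exact h
    · exact absurd heqs (hneq' s h hst)
  exact ⟨hss, rfl⟩

end Aux

/-- For every `j ∉ {1, i}` and every integer `r ≥ 2`,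
`P(F^{r,1}_{1,j} \ Ca) ≥ P(F^{1,r}_{1,j} \ Ca)`. -/
theorem prob_Fr1_diff_Ca_ge
    {k : ℕ} (hk : 2 ≤ k) (n : Fin k → ℕ) (b1 : Fin k) (hb1 : b1 = ⟨0, by omega⟩)
    (i : Fin k) (hmax : ∀ j : Fin k, n j ≤ n b1) (hi : n i + 2 ≤ n b1)
    (μ : Measure (ℕ → Fin k)) (hμ : IsIIDUniform μ)
    (j : Fin k) (hj : j ∉ ({b1, i} : Set (Fin k))) (r : ℕ) (hr : 2 ≤ r) :
    μ (Fab n b1 j 1 r \ Ca n b1 i) ≤ μ (Fab n b1 j r 1 \ Ca n b1 i) := by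
  classical
  haveI := hμ.prob
  simp only [Set.mem_insert_iff, Set.mem_singleton_iff, not_or] at hj
  obtain ⟨hjb1, hji⟩ := hj
  have hb1j : b1 ≠ j := Ne.symm hjb1
  have hij : i ≠ j := Ne.symm hji
  have hib1 : i ≠ b1 := by
    intro h; rw [h] at hi; omega
  have hni : (n i : ℤ) + 2 ≤ (n b1 : ℤ) := by exact_mod_cast hi
  have hr1 : 1 ≤ r := by omega
  have hBsub : ∀ p : ℕ × ℕ, psi b1 j p.1 p.2 ⁻¹' Aset n b1 i j 1 r p.1 p.2 ⊆
      Aset n b1 i j r 1 p.1 p.2 := by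
    intro p ω hωB
    have h2 := psi_mem_Aset hb1j hib1 hij hr hni hωB
    rwa [psi_psi] at h2
  have hmeasB : ∀ p : ℕ × ℕ,
      MeasurableSet (psi b1 j p.1 p.2 ⁻¹' Aset n b1 i j 1 r p.1 p.2) :=
    fun p => (measurable_psi b1 j p.1 p.2) (measurableSet_Aset n b1 i j 1 r p.1 p.2)
  have hdisj : Pairwise (Function.onFun Disjoint
      (fun p : ℕ × ℕ => psi b1 j p.1 p.2 ⁻¹' Aset n b1 i j 1 r p.1 p.2)) := by
    intro p q hpq
    rw [Function.onFun, Set.disjoint_left]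
    intro ω hωp hωq
    obtain ⟨h1, h2⟩ := Aset_params_unique (hBsub p hωp) (hBsub q hωq)
    exact hpq (Prod.ext h1 h2)
  calc μ (Fab n b1 j 1 r \ Ca n b1 i)
      ≤ μ (⋃ p : ℕ × ℕ, Aset n b1 i j 1 r p.1 p.2) := by
        refine measure_mono fun ω hω => ?_
        obtain ⟨s, t, h⟩ := exists_Aset_of_mem (hmax j) hr hω
        exact Set.mem_iUnion.mpr ⟨(s, t), h⟩
    _ ≤ ∑' p : ℕ × ℕ, μ (Aset n b1 i j 1 r p.1 p.2) := measure_iUnion_le _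
    _ = ∑' p : ℕ × ℕ, μ (psi b1 j p.1 p.2 ⁻¹' Aset n b1 i j 1 r p.1 p.2) := by
        refine tsum_congr fun p => ?_
        conv_lhs => rw [← map_psi hμ b1 j p.1 p.2]
        rw [Measure.map_apply (measurable_psi b1 j p.1 p.2)
          (measurableSet_Aset n b1 i j 1 r p.1 p.2)]
    _ = μ (⋃ p : ℕ × ℕ, psi b1 j p.1 p.2 ⁻¹' Aset n b1 i j 1 r p.1 p.2) :=
        (measure_iUnion hdisj hmeasB).symm
    _ ≤ μ (Fab n b1 j r 1 \ Ca n b1 i) := by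
        refine measure_mono (Set.iUnion_subset fun p => (hBsub p).trans ?_)
        exact Aset_subset hr1 le_rfl hb1j

end BallsBins
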